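/- Let P, ℓ, g > 0. Define 𝓛_F(r) = −15Pr⁶ℓ³/(8g(P²ℓ² + r²)^{7/2}) for r > 0. Then for every r > 0: (i) 𝓛_F(r) < 0; (ii) 𝓛_F(r) − (r/2)·(d𝓛_F/dr)(r) = −15Pℓ³r⁶(3r² − 4P²ℓ²)/(16g(P²ℓ² + r²)^{9/2}); (iii) this quantity Φ(r) := 𝓛_F(r) − (r/2)·(d𝓛_F/dr)(r) satisfies Φ(r) ≤ 0 if and only if r ≥ 2Pℓ/√3. -/

import Mathlib

open Filter Topology Set

/-- **Causality violation for the Bardeen-class black string.** With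
`𝓛_F(r) = -15Pr⁶ℓ³/(8g(P²ℓ² + r²)^{7/2})`, for every `r > 0`: (i) `𝓛_F(r) < 0`;
(ii) `Φ(r) = 𝓛_F(r) - (r/2) 𝓛_F'(r) = -15Pℓ³r⁶(3r² - 4P²ℓ²)/(16g(P²ℓ² + r²)^{9/2})`;
(iii) `Φ(r) ≤ 0 ↔ r ≥ 2Pℓ/√3`, so causality is violated for `0 < r < 2Pℓ/√3`. -/
theorem bardeen_causality (P ℓ g : ℝ) (hP : 0 < P) (hℓ : 0 < ℓ) (hg : 0 < g)
    (LF : ℝ → ℝ)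
    (hLF : ∀ r, LF r = -15 * P * r ^ 6 * ℓ ^ 3 /
        (8 * g * (P ^ 2 * ℓ ^ 2 + r ^ 2) ^ ((7:ℝ)/2))) :
    ∀ r > (0:ℝ),
      LF r < 0 ∧
      LF r - (r / 2) * deriv LF r
        = -15 * P * ℓ ^ 3 * r ^ 6 * (3 * r ^ 2 - 4 * P ^ 2 * ℓ ^ 2) /
            (16 * g * (P ^ 2 * ℓ ^ 2 + r ^ 2) ^ ((9:ℝ)/2)) ∧
      (LF r - (r / 2) * deriv LF r ≤ 0 ↔ 2 * P * ℓ / Real.sqrt 3 ≤ r) := by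
  intro r hr
  have hfun : LF = fun r => -15 * P * r ^ 6 * ℓ ^ 3 /
      (8 * g * (P ^ 2 * ℓ ^ 2 + r ^ 2) ^ ((7:ℝ)/2)) := funext hLF
  have hs : (0:ℝ) < P ^ 2 * ℓ ^ 2 + r ^ 2 := by positivity
  set s : ℝ := P ^ 2 * ℓ ^ 2 + r ^ 2 with hs_def
  have ht : (0:ℝ) < s ^ ((5:ℝ)/2) := Real.rpow_pos_of_pos hs _
  set t : ℝ := s ^ ((5:ℝ)/2) with ht_def
  have hsne : s ≠ 0 := ne_of_gt hs
  have htne : t ≠ 0 := ne_of_gt ht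
  have hgne : g ≠ 0 := ne_of_gt hg
  have h7 : s ^ ((7:ℝ)/2) = s * t := by
    rw [ht_def, show (7:ℝ)/2 = 1 + 5/2 by norm_num, Real.rpow_add hs, Real.rpow_one]
  have h9 : s ^ ((9:ℝ)/2) = s ^ 2 * t := by
    rw [ht_def, show (9:ℝ)/2 = 2 + 5/2 by norm_num, Real.rpow_add hs, Real.rpow_two]
  have h52 : s ^ ((7:ℝ)/2 - 1) = t := by norm_num [ht_def]
  have hDne : 8 * g * s ^ ((7:ℝ)/2) ≠ 0 := by
    rw [h7]; positivity
  have hN : HasDerivAt (fun x : ℝ => -15 * P * x ^ 6 * ℓ ^ 3)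
      (-15 * P * (6 * r ^ 5) * ℓ ^ 3) r := by
    simpa using ((hasDerivAt_pow 6 r).const_mul (-15 * P)).mul_const (ℓ ^ 3)
  have hsD : HasDerivAt (fun x : ℝ => P ^ 2 * ℓ ^ 2 + x ^ 2) (2 * r) r := by
    simpa using ((hasDerivAt_pow 2 r).const_add (P ^ 2 * ℓ ^ 2))
  have hpow : HasDerivAt (fun x : ℝ => (P ^ 2 * ℓ ^ 2 + x ^ 2) ^ ((7:ℝ)/2))
      (2 * r * ((7:ℝ)/2) * s ^ ((7:ℝ)/2 - 1)) r :=
    hsD.rpow_const (Or.inl hsne)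
  have hD : HasDerivAt (fun x : ℝ => 8 * g * (P ^ 2 * ℓ ^ 2 + x ^ 2) ^ ((7:ℝ)/2))
      (8 * g * (2 * r * ((7:ℝ)/2) * s ^ ((7:ℝ)/2 - 1))) r := hpow.const_mul (8 * g)
  have hLF' : HasDerivAt LF
      ((-15 * P * (6 * r ^ 5) * ℓ ^ 3 * (8 * g * s ^ ((7:ℝ)/2)) -
        -15 * P * r ^ 6 * ℓ ^ 3 * (8 * g * (2 * r * ((7:ℝ)/2) * s ^ ((7:ℝ)/2 - 1)))) /
        (8 * g * s ^ ((7:ℝ)/2)) ^ 2) r := by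
    rw [hfun]; exact hN.div hD hDne
  have hderiv := hLF'.deriv
  have h1 : LF r < 0 := by
    rw [hLF r, h7]
    apply div_neg_of_neg_of_pos
    · have : (0:ℝ) < 15 * P * r ^ 6 * ℓ ^ 3 := by positivity
      linarith
    · positivity
  have h2 : LF r - r / 2 * deriv LF r =
      -15 * P * ℓ ^ 3 * r ^ 6 * (3 * r ^ 2 - 4 * P ^ 2 * ℓ ^ 2) /
        (16 * g * s ^ ((9:ℝ)/2)) := by
    rw [hLF r, hderiv, h52, h7, h9]
    field_simp
    rw [hs_def]
    ring
  refine ⟨h1, h2, ?_⟩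
  rw [h2, h9]
  have hden : (0:ℝ) < 16 * g * (s ^ 2 * t) := by positivity
  have key : -15 * P * ℓ ^ 3 * r ^ 6 * (3 * r ^ 2 - 4 * P ^ 2 * ℓ ^ 2) /
      (16 * g * (s ^ 2 * t)) ≤ 0 ↔ 0 ≤ 3 * r ^ 2 - 4 * P ^ 2 * ℓ ^ 2 := by
    rw [div_nonpos_iff]
    constructor
    · rintro (⟨h, hd⟩ | ⟨h, _⟩)
      · linarith
      · by_contra hc
        push_neg at hc
        have hpos : (0:ℝ) < 15 * P * ℓ ^ 3 * r ^ 6 * (-(3 * r ^ 2 - 4 * P ^ 2 * ℓ ^ 2)) := by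
          have : (0:ℝ) < 15 * P * ℓ ^ 3 * r ^ 6 := by positivity
          exact mul_pos this (by linarith)
        linarith [hpos]
    · intro h
      refine Or.inr ⟨?_, le_of_lt hden⟩
      have hnn : (0:ℝ) ≤ 15 * P * ℓ ^ 3 * r ^ 6 * (3 * r ^ 2 - 4 * P ^ 2 * ℓ ^ 2) :=
        mul_nonneg (by positivity) h
      linarith
  rw [key]
  have h3 : (0:ℝ) < Real.sqrt 3 := by positivity
  have hsq3 : (r * Real.sqrt 3) ^ 2 = 3 * r ^ 2 := by
    rw [mul_pow, Real.sq_sqrt (by norm_num : (0:ℝ) ≤ 3)]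
    ring
  constructor
  · intro h
    rw [div_le_iff₀ h3]
    apply le_of_pow_le_pow_left₀ two_ne_zero (by positivity)
    rw [hsq3]
    nlinarith
  · intro h
    rw [div_le_iff₀ h3] at h
    have hsq : (2 * P * ℓ) ^ 2 ≤ (r * Real.sqrt 3) ^ 2 :=
      pow_le_pow_left₀ (by positivity) h 2
    rw [hsq3] at hsq
    nlinarith
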